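/- arXiv:2308.12254 — 2 statements merged into one kernel-verified Lean document; each statement's English description precedes it below -/
import Mathlib

section
/- In the twisted Yangian Y_N, if {i,j} ∩ {k,l} = ∅ then [s_{ij}(u), s̃_{kl}(v)] = 0, where S̃(u) = S(u)^{-1} = (s̃_{ij}(u)) is the inverse of the generator matrix S(u) = (s_{ij}(u)). -/
noncomputable section

namespace TY

variable {A : Type*} [Ring A] [Algebra ℂ A]

/-- For `f(u) = Σ_{r≥0} a_r u^{-r}` (recorded as the power series `Σ a_r x^r` in
`x = u⁻¹`), this is the series `f(-u)`. -/
def negVar (f : PowerSeries A) : PowerSeries A :=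
  PowerSeries.mk fun n => ((-1 : ℂ) ^ n) • PowerSeries.coeff n f

/-- For `f(u) = Σ_{r≥0} a_r u^{-r}`, this is the series `f(u + c)`, expanded again
in powers of `u⁻¹`. -/
def shiftVar (c : ℂ) (f : PowerSeries A) : PowerSeries A :=
  PowerSeries.mk fun n => ∑ r ∈ Finset.range (n + 1),
    ((-1 : ℂ) ^ (n - r) * ((n - 1).choose (n - r) : ℂ) * c ^ (n - r)) •
      PowerSeries.coeff r f

open Classical in
/-- A series in the single variable `u⁻¹`, viewed as a two-variable series placed in
the `k`-th variable. -/
def inVar (k : Fin 2) (f : PowerSeries A) : MvPowerSeries (Fin 2) A := fun m =>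
  if m = Finsupp.single k (m k) then PowerSeries.coeff (m k) f else 0

/-- `f(u)` as a series in the two variables `x = u⁻¹`, `y = v⁻¹`. -/
abbrev inX (f : PowerSeries A) : MvPowerSeries (Fin 2) A := inVar 0 f

/-- `f(v)` as a series in the two variables `x = u⁻¹`, `y = v⁻¹`. -/
abbrev inY (f : PowerSeries A) : MvPowerSeries (Fin 2) A := inVar 1 f

/-- `x = u⁻¹` as a two-variable series. -/
def Xv : MvPowerSeries (Fin 2) A := MvPowerSeries.X 0

/-- `y = v⁻¹` as a two-variable series. -/
def Yv : MvPowerSeries (Fin 2) A := MvPowerSeries.X 1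

/-- The left-hand side `(u²-v²)[s_{ij}(u), s_{kl}(v)]` of the quaternary relation,
multiplied by `x²y²` (where `x = u⁻¹`, `y = v⁻¹`) to clear negative powers. -/
def quatLHS {N : ℕ} (s : Fin N → Fin N → PowerSeries A) (i j k l : Fin N) :
    MvPowerSeries (Fin 2) A :=
  (Yv ^ 2 - Xv ^ 2) * ⁅inX (s i j), inY (s k l)⁆

/-- The right-hand side of the quaternary relation, multiplied by `x²y²`. -/
def quatRHS {N : ℕ} (s : Fin N → Fin N → PowerSeries A) (i j k l : Fin N) :
    MvPowerSeries (Fin 2) A :=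
  Xv * Yv * (Xv + Yv) * (inX (s k j) * inY (s i l) - inY (s k j) * inX (s i l))
    - Xv * Yv * (Yv - Xv) * (inX (s i k) * inY (s j l) - inY (s k i) * inX (s l j))
    + Xv ^ 2 * Yv ^ 2 * (inX (s k i) * inY (s j l) - inY (s k i) * inX (s j l))

/-- The quaternary relation (2.2). -/
def QuatRel {N : ℕ} (s : Fin N → Fin N → PowerSeries A) : Prop :=
  ∀ i j k l : Fin N, quatLHS s i j k l = quatRHS s i j k l

/-- `s_{ij}(u) = δ_{ij} + Σ_{r≥1} s_{ij}^{(r)} u^{-r}`. -/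
def HasDeltaConst {N : ℕ} (s : Fin N → Fin N → PowerSeries A) : Prop :=
  ∀ i j : Fin N, PowerSeries.constantCoeff (s i j) = if i = j then 1 else 0

/-- The symmetry relation `s_{ji}(-u) = s_{ij}(u) + (s_{ij}(u) - s_{ij}(-u))/(2u)`. -/
def SymRel {N : ℕ} (s : Fin N → Fin N → PowerSeries A) : Prop :=
  ∀ i j : Fin N,
    negVar (s j i)
      = s i j + (2 : ℂ)⁻¹ • (PowerSeries.X * (s i j - negVar (s i j)))

/-- The upper unitriangular matrix `E(u)` with entries `e_{ij}(u)`, `i < j`. -/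
def upperMat {N : ℕ} (e : Fin N → Fin N → PowerSeries A) :
    Matrix (Fin N) (Fin N) (PowerSeries A) :=
  Matrix.of fun i j => if i = j then 1 else if i < j then e i j else 0

/-- The lower unitriangular matrix `F(u)` with entries `f_{ji}(u)`, `i < j`. -/
def lowerMat {N : ℕ} (f : Fin N → Fin N → PowerSeries A) :
    Matrix (Fin N) (Fin N) (PowerSeries A) :=
  Matrix.of fun i j => if i = j then 1 else if j < i then f i j else 0

/-- The (unique) Gauss decomposition `S(u) = F(u) D(u) E(u)`: `D(u)` diagonal with
entries `d_i(u)` having constant term `1`, `E(u)` upper unitriangular with entries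
`e_{ij}(u)` (for `i < j`), `F(u)` lower unitriangular with entries `f_{ji}(u)`. -/
structure IsGaussDecomp {N : ℕ} (s : Fin N → Fin N → PowerSeries A)
    (d : Fin N → PowerSeries A) (e f : Fin N → Fin N → PowerSeries A) : Prop where
  d_const : ∀ i, PowerSeries.constantCoeff (d i) = 1
  e_const : ∀ i j : Fin N, i < j → PowerSeries.constantCoeff (e i j) = 0
  f_const : ∀ i j : Fin N, i < j → PowerSeries.constantCoeff (f j i) = 0
  decomp : Matrix.of s = lowerMat f * Matrix.diagonal d * upperMat e

/-- `b_{ji}(u) = f_{ji}(u - i/2)`; the indices `j i` here are 0-based, so the paper's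
(1-based) index `i` equals `(i : ℕ) + 1`. -/
def bSeriesAt {N : ℕ} (f : Fin N → Fin N → PowerSeries A) (j i : Fin N) :
    PowerSeries A :=
  shiftVar (-(((i : ℕ) : ℂ) + 1) / 2) (f j i)

/-- `h_0(u) = d_1(u)` and, for `k ≥ 1`, `h_k(u) = d̃_k(u - k/2) d_{k+1}(u - k/2)`;
the index `k` here is the paper's index, while the entries of `d`, `dt` are indexed
0-based (so the paper's `d_m` is `d ⟨m-1⟩`). -/
def hSeriesAt {N : ℕ} (d dt : Fin N → PowerSeries A) (k : Fin N) :
    PowerSeries A :=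
  if _h : (k : ℕ) = 0 then d k
  else
    shiftVar (-((k : ℕ) : ℂ) / 2) (dt ⟨(k : ℕ) - 1, by have := k.isLt; omega⟩) *
      shiftVar (-((k : ℕ) : ℂ) / 2) (d k)

/-- The free algebra on the generators `s_{ij}^{(r)}`, `r ≥ 1` (the triple
`(i, j, n)` encodes `s_{ij}^{(n+1)}`). -/
abbrev FA (N : ℕ) := FreeAlgebra ℂ (Fin N × Fin N × ℕ)

/-- The generating series `s_{ij}(u)` of the free algebra. -/
def sFree (N : ℕ) (i j : Fin N) : PowerSeries (FA N) :=
  PowerSeries.mk fun r =>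
    match r with
    | 0 => if i = j then 1 else 0
    | n + 1 => FreeAlgebra.ι ℂ (i, j, n)

/-- The defining relations of the extended twisted Yangian `X_N`: all coefficients
of the quaternary relations. -/
inductive XRel (N : ℕ) : FA N → FA N → Prop
  | quat (i j k l : Fin N) (m : Fin 2 →₀ ℕ) :
      XRel N (MvPowerSeries.coeff m (quatLHS (sFree N) i j k l))
        (MvPowerSeries.coeff m (quatRHS (sFree N) i j k l))

/-- The extended twisted Yangian `X_N`. -/
abbrev Xt (N : ℕ) := RingQuot (XRel N)

/-- The generating series `s_{ij}(u)` of `X_N`. -/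
def sX (N : ℕ) (i j : Fin N) : PowerSeries (Xt N) :=
  PowerSeries.map (RingQuot.mkRingHom (XRel N)) (sFree N i j)

/-- The defining relations of the twisted Yangian `Y_N`: the quaternary relations
together with the symmetry relation `s_{11}(u) = s_{11}(-u)`. -/
inductive YRel (N : ℕ) : FA N → FA N → Prop
  | quat (i j k l : Fin N) (m : Fin 2 →₀ ℕ) :
      YRel N (MvPowerSeries.coeff m (quatLHS (sFree N) i j k l))
        (MvPowerSeries.coeff m (quatRHS (sFree N) i j k l))
  | symm (h : 0 < N) (n : ℕ) :
      YRel N (PowerSeries.coeff n (sFree N ⟨0, h⟩ ⟨0, h⟩))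
        (PowerSeries.coeff n (negVar (sFree N ⟨0, h⟩ ⟨0, h⟩)))

/-- The twisted Yangian `Y_N`. -/
abbrev Yt (N : ℕ) := RingQuot (YRel N)

/-- The generating series `s_{ij}(u)` of `Y_N`. -/
def sY (N : ℕ) (i j : Fin N) : PowerSeries (Yt N) :=
  PowerSeries.map (RingQuot.mkRingHom (YRel N)) (sFree N i j)

/-- `x` is fixed by every (auto)morphism `ν_g : S(u) ↦ g(u) S(u)` of `Y_N`, where
`g(u) ∈ 1 + u⁻²ℂ[[u⁻²]]`. -/
def SYcond (N : ℕ) (x : Yt N) : Prop :=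
  ∀ (φ : Yt N →ₐ[ℂ] Yt N) (g : PowerSeries ℂ),
    PowerSeries.constantCoeff g = 1 →
    (∀ n : ℕ, PowerSeries.coeff (2 * n + 1) g = 0) →
    (∀ i j : Fin N,
      PowerSeries.map (φ : Yt N →+* Yt N) (sY N i j)
        = PowerSeries.map (algebraMap ℂ (Yt N)) g * sY N i j) →
    φ x = x

/-- The special twisted Yangian `SY_N`, as the subalgebra of `Y_N` of elements
stable under all automorphisms `ν_g`. -/
def specialSubalgebra (N : ℕ) : Subalgebra ℂ (Yt N) where
  carrier := {x | SYcond N x}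
  mul_mem' := fun ha hb φ g h1 h2 h3 => by
    rw [map_mul, ha φ g h1 h2 h3, hb φ g h1 h2 h3]
  one_mem' := fun φ _ _ _ _ => map_one φ
  add_mem' := fun ha hb φ g h1 h2 h3 => by
    rw [map_add, ha φ g h1 h2 h3, hb φ g h1 h2 h3]
  zero_mem' := fun φ _ _ _ _ => map_zero φ
  algebraMap_mem' := fun c φ _ _ _ _ => φ.commutes c

/-- `x < y` for an explicitly given linear order. -/
def ltOf {G : Type*} (L : LinearOrder G) (x y : G) : Prop :=
  L.toPartialOrder.toPreorder.toLT.lt x y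

/-- The ordered monomial attached to a finitely supported exponent function `m`,
with the generators multiplied in increasing order relative to the linear order
`L`. -/
def orderedMonomial {R : Type*} [Ring R] {G : Type*} (L : LinearOrder G)
    (elem : G → R) (m : G →₀ ℕ) : R :=
  letI := L
  ((m.support.sort (· ≤ ·)).map fun g => elem g ^ m g).prod

set_option linter.unusedSectionVars false
/-! ### Auxiliary lemmas -/

section InVarLemmas

lemma coeff_inVar (k : Fin 2) (f : PowerSeries A) (m : Fin 2 →₀ ℕ) :
    MvPowerSeries.coeff m (inVar k f)
      = if m = Finsupp.single k (m k) then PowerSeries.coeff (m k) f else 0 := by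
  by_cases h : m = Finsupp.single k (m k)
  · rw [if_pos h, MvPowerSeries.coeff_apply, inVar, if_pos h]
  · rw [if_neg h, MvPowerSeries.coeff_apply, inVar, if_neg h]

lemma inVar_zero (k : Fin 2) : inVar k (0 : PowerSeries A) = 0 := by
  ext m
  simp [coeff_inVar]

lemma inVar_one (k : Fin 2) : inVar k (1 : PowerSeries A) = 1 := by
  classical
  ext m
  rw [coeff_inVar, MvPowerSeries.coeff_one]
  by_cases h0 : m = 0
  · rw [if_pos h0, if_pos, h0]
    · simp
    · rw [h0]; simp
  · rw [if_neg h0]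
    by_cases h : m = Finsupp.single k (m k)
    · rw [if_pos h, PowerSeries.coeff_one, if_neg]
      intro hk
      exact h0 (by rw [h, hk, Finsupp.single_zero])
    · rw [if_neg h]

lemma inVar_sum {ι : Type*} (k : Fin 2) (u : Finset ι) (F : ι → PowerSeries A) :
    inVar k (∑ c ∈ u, F c) = ∑ c ∈ u, inVar k (F c) := by
  ext m
  rw [map_sum]
  simp only [coeff_inVar]
  split_ifs with h
  · rw [map_sum]
  · simp

lemma inVar_mul (k : Fin 2) (f g : PowerSeries A) :
    inVar k (f * g) = inVar k f * inVar k g := by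
  classical
  ext m
  rw [MvPowerSeries.coeff_mul, coeff_inVar]
  by_cases hm : m = Finsupp.single k (m k)
  · rw [if_pos hm, PowerSeries.coeff_mul,
      show Finset.HasAntidiagonal.antidiagonal m = Finset.HasAntidiagonal.antidiagonal (Finsupp.single k (m k)) by rw [← hm],
      Finsupp.antidiagonal_single, Finset.sum_map]
    refine Finset.sum_congr rfl fun p _ => ?_
    simp [coeff_inVar, Finsupp.single_eq_same]
  · rw [if_neg hm]
    symm
    refine Finset.sum_eq_zero fun p hp => ?_
    rw [coeff_inVar, coeff_inVar]
    by_cases h1 : p.1 = Finsupp.single k (p.1 k)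
    · by_cases h2 : p.2 = Finsupp.single k (p.2 k)
      · exfalso
        apply hm
        have hpm := Finset.HasAntidiagonal.mem_antidiagonal.mp hp
        have hmm : m = Finsupp.single k (p.1 k + p.2 k) := by
          rw [← hpm, Finsupp.single_add, ← h1, ← h2]
        rw [hmm]
        simp [Finsupp.single_eq_same]
      · rw [if_neg h2, mul_zero]
    · rw [if_neg h1, zero_mul]

lemma map_inVar {B : Type*} [Ring B] [Algebra ℂ B] (φ : A →+* B) (k : Fin 2)
    (f : PowerSeries A) :
    MvPowerSeries.map φ (inVar k f) = inVar k (PowerSeries.map φ f) := by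
  ext m
  rw [MvPowerSeries.coeff_map]
  simp only [coeff_inVar]
  split_ifs with h
  · rw [PowerSeries.coeff_map]
  · exact map_zero φ

lemma coeff_inVar_mul_inVar (k k' : Fin 2) (hkk : k ≠ k') (f g : PowerSeries A) (m n : ℕ) :
    MvPowerSeries.coeff (Finsupp.single k m + Finsupp.single k' n) (inVar k f * inVar k' g)
      = PowerSeries.coeff m f * PowerSeries.coeff n g := by
  classical
  rw [MvPowerSeries.coeff_mul]
  refine (Finset.sum_eq_single (Finsupp.single k m, Finsupp.single k' n) ?_ ?_).trans ?_
  · intro p hp hne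
    rw [coeff_inVar, coeff_inVar]
    by_cases h1 : p.1 = Finsupp.single k (p.1 k)
    · by_cases h2 : p.2 = Finsupp.single k' (p.2 k')
      · exfalso
        apply hne
        have hpm := Finset.HasAntidiagonal.mem_antidiagonal.mp hp
        have hk := DFunLike.congr_fun hpm k
        have hk' := DFunLike.congr_fun hpm k'
        have hp2k : p.2 k = 0 := by rw [h2, Finsupp.single_eq_of_ne hkk]
        have hp1k' : p.1 k' = 0 := by rw [h1, Finsupp.single_eq_of_ne (Ne.symm hkk)]
        simp only [Finsupp.add_apply, Finsupp.single_eq_same,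
          Finsupp.single_eq_of_ne hkk, Finsupp.single_eq_of_ne (Ne.symm hkk),
          hp2k, hp1k', add_zero, zero_add] at hk hk'
        refine Prod.ext ?_ ?_
        · rw [h1, hk]
        · rw [h2, hk']
      · rw [if_neg h2, mul_zero]
    · rw [if_neg h1, zero_mul]
  · intro habs
    refine absurd ?_ habs
    rw [Finset.HasAntidiagonal.mem_antidiagonal]
  · simp [coeff_inVar, Finsupp.single_eq_same]

end InVarLemmas

section Transfer

lemma map_quatLHS {B : Type*} [Ring B] [Algebra ℂ B] (φ : A →+* B) {N : ℕ}
    (s : Fin N → Fin N → PowerSeries A) (i j k l : Fin N) :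
    MvPowerSeries.map φ (quatLHS s i j k l)
      = quatLHS (fun a b => PowerSeries.map φ (s a b)) i j k l := by
  simp only [quatLHS, Xv, Yv, Ring.lie_def, map_sub, map_mul, map_pow,
    MvPowerSeries.map_X, map_inVar]

lemma map_quatRHS {B : Type*} [Ring B] [Algebra ℂ B] (φ : A →+* B) {N : ℕ}
    (s : Fin N → Fin N → PowerSeries A) (i j k l : Fin N) :
    MvPowerSeries.map φ (quatRHS s i j k l)
      = quatRHS (fun a b => PowerSeries.map φ (s a b)) i j k l := by
  simp only [quatRHS, Xv, Yv, map_sub, map_add, map_mul, map_pow,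
    MvPowerSeries.map_X, map_inVar]

lemma quat_sY (N : ℕ) : QuatRel (sY N) := by
  intro i j k l
  have hs : sY N = fun a b =>
      PowerSeries.map (RingQuot.mkRingHom (YRel N)) (sFree N a b) := rfl
  rw [hs, ← map_quatLHS, ← map_quatRHS]
  apply MvPowerSeries.ext
  intro m
  rw [MvPowerSeries.coeff_map, MvPowerSeries.coeff_map]
  exact RingQuot.mkRingHom_rel (YRel.quat i j k l m)

end Transfer

section Cancel

lemma cancel_lemma (f : MvPowerSeries (Fin 2) A)
    (h : ((Yv : MvPowerSeries (Fin 2) A) ^ 2 - Xv ^ 2) * f = 0) : f = 0 := by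
  classical
  have key : ∀ M : Fin 2 →₀ ℕ,
      (if Finsupp.single 1 2 ≤ M then
          MvPowerSeries.coeff (M - Finsupp.single 1 2) f else 0)
        = (if Finsupp.single 0 2 ≤ M then
            MvPowerSeries.coeff (M - Finsupp.single 0 2) f else 0) := by
    intro M
    have h' : (Yv : MvPowerSeries (Fin 2) A) ^ 2 * f = Xv ^ 2 * f := by
      rw [← sub_eq_zero, ← sub_mul]; exact h
    have hM := congrArg (MvPowerSeries.coeff M) h'
    simp only [Yv, Xv, MvPowerSeries.X_pow_eq, MvPowerSeries.coeff_monomial_mul,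
      one_mul] at hM
    exact hM
  have base : ∀ m : Fin 2 →₀ ℕ, m 1 < 2 → MvPowerSeries.coeff m f = 0 := by
    intro m hm
    have h1 := key (m + Finsupp.single 0 2)
    rw [if_neg, if_pos le_add_self, add_tsub_cancel_right] at h1
    · exact h1.symm
    · rw [Finsupp.single_le_iff, Finsupp.add_apply, Finsupp.single_apply]
      simp only [show ¬((0 : Fin 2) = 1) by decide, if_false, add_zero]
      omega
  suffices H : ∀ n : ℕ, ∀ m : Fin 2 →₀ ℕ, m 1 ≤ n → MvPowerSeries.coeff m f = 0 by
    apply MvPowerSeries.ext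
    intro m
    rw [map_zero]
    exact H (m 1) m le_rfl
  intro n
  induction n with
  | zero => exact fun m hm => base m (by omega)
  | succ n ih =>
    intro m hm
    by_cases h2 : m 1 < 2
    · exact base m h2
    · have c1 : Finsupp.single (1 : Fin 2) 2 ≤ m + Finsupp.single 0 2 := by
        rw [Finsupp.single_le_iff, Finsupp.add_apply, Finsupp.single_apply]
        simp only [show ¬((0 : Fin 2) = 1) by decide, if_false, add_zero]
        omega
      have h1 := key (m + Finsupp.single 0 2)
      rw [if_pos c1, if_pos le_add_self, add_tsub_cancel_right] at h1
      rw [← h1]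
      apply ih
      rw [Finsupp.tsub_apply, Finsupp.add_apply, Finsupp.single_apply,
        Finsupp.single_apply]
      simp only [show ¬((0 : Fin 2) = 1) by decide, if_false, add_zero,
        show ((1 : Fin 2) = 1) from rfl, if_true]
      omega

end Cancel

section Main

lemma main_calc {N : ℕ} (s t : Fin N → Fin N → PowerSeries A)
    (hq : QuatRel s)
    (h1 : ∀ a b : Fin N, (∑ c, s a c * t c b) = if a = b then 1 else 0)
    (h2 : ∀ a b : Fin N, (∑ c, t a c * s c b) = if a = b then 1 else 0)
    (i j k l : Fin N) (hik : i ≠ k) (hil : i ≠ l) (hjk : j ≠ k) (hjl : j ≠ l) :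
    inX (s i j) * inY (t k l) = inY (t k l) * inX (s i j) := by
  classical
  -- transferred inverse relations
  have hA : ∀ a b : Fin N,
      (∑ c, inY (s a c) * inY (t c b)) = if a = b then (1 : MvPowerSeries (Fin 2) A) else 0 := by
    intro a b
    have hh : inVar (1 : Fin 2) (∑ c, s a c * t c b)
        = inVar 1 (if a = b then 1 else 0) := by rw [h1 a b]
    rw [inVar_sum] at hh
    simp only [inVar_mul] at hh
    rw [hh]
    split_ifs with h
    exacts [inVar_one 1, inVar_zero 1]
  have hB : ∀ a b : Fin N,
      (∑ c, inY (t a c) * inY (s c b)) = if a = b then (1 : MvPowerSeries (Fin 2) A) else 0 := by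
    intro a b
    have hh : inVar (1 : Fin 2) (∑ c, t a c * s c b)
        = inVar 1 (if a = b then 1 else 0) := by rw [h2 a b]
    rw [inVar_sum] at hh
    simp only [inVar_mul] at hh
    rw [hh]
    split_ifs with h
    exacts [inVar_one 1, inVar_zero 1]
  -- centrality
  have hW : ∀ x : MvPowerSeries (Fin 2) A,
      x * ((Yv : MvPowerSeries (Fin 2) A) ^ 2 - Xv ^ 2) = ((Yv : MvPowerSeries (Fin 2) A) ^ 2 - Xv ^ 2) * x :=
    fun x => (((x.commute_X 1).pow_right 2).sub_right ((x.commute_X 0).pow_right 2)).eq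
  -- step A
  have stepA : (∑ a, ∑ b, inY (t k a) *
        (inX (s i j) * inY (s a b) - inY (s a b) * inX (s i j)) * inY (t b l))
      = inY (t k l) * inX (s i j) - inX (s i j) * inY (t k l) := by
    have p1 : (∑ a, ∑ b, inY (t k a) * (inX (s i j) * inY (s a b)) * inY (t b l))
        = inY (t k l) * inX (s i j) := by
      have hrow : ∀ a : Fin N,
          (∑ b, inY (t k a) * (inX (s i j) * inY (s a b)) * inY (t b l))
            = (inY (t k a) * inX (s i j)) * (if a = l then (1 : MvPowerSeries (Fin 2) A) else 0) := by
        intro a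
        rw [← hA a l, Finset.mul_sum]
        exact Finset.sum_congr rfl fun b _ => by simp only [mul_assoc]
      simp only [hrow, mul_ite, mul_one, mul_zero]
      simp
    have p2 : (∑ a, ∑ b, inY (t k a) * (inY (s a b) * inX (s i j)) * inY (t b l))
        = inX (s i j) * inY (t k l) := by
      rw [Finset.sum_comm]
      have hcol : ∀ b : Fin N,
          (∑ a, inY (t k a) * (inY (s a b) * inX (s i j)) * inY (t b l))
            = (if k = b then (1 : MvPowerSeries (Fin 2) A) else 0) * (inX (s i j) * inY (t b l)) := by
        intro b
        rw [← hB k b, Finset.sum_mul]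
        exact Finset.sum_congr rfl fun a _ => by simp only [mul_assoc]
      simp only [hcol, ite_mul, one_mul, zero_mul]
      simp
    simp only [mul_sub, sub_mul, Finset.sum_sub_distrib]
    rw [p1, p2]
  -- the kill lemma
  have kill : ∀ C : MvPowerSeries (Fin 2) A, (∀ x, x * C = C * x) →
      ∀ P Q : Fin N → MvPowerSeries (Fin 2) A,
      ((∑ a, inY (t k a) * P a) = 0 ∨ (∑ b, Q b * inY (t b l)) = 0) →
      (∑ a, ∑ b, inY (t k a) * (C * (P a * Q b)) * inY (t b l)) = 0 := by
    intro C hC P Q hPQ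
    have hterm : ∀ a b, inY (t k a) * (C * (P a * Q b)) * inY (t b l)
        = C * ((inY (t k a) * P a) * (Q b * inY (t b l))) := by
      intro a b
      simp only [← mul_assoc, hC]
    have hsum : (∑ a, ∑ b, inY (t k a) * (C * (P a * Q b)) * inY (t b l))
        = C * ((∑ a, inY (t k a) * P a) * (∑ b, Q b * inY (t b l))) := by
      rw [Finset.sum_mul_sum, Finset.mul_sum]
      refine Finset.sum_congr rfl fun a _ => ?_
      rw [Finset.mul_sum]
      exact Finset.sum_congr rfl fun b _ => hterm a b
    rw [hsum]
    rcases hPQ with h | h <;> rw [h] <;> simp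
  -- the six vanishing sums
  have e1 : (∑ b, inY (s i b) * inY (t b l)) = 0 := by rw [hA i l, if_neg hil]
  have e2 : (∑ a, inY (t k a) * inY (s a j)) = 0 := by rw [hB k j, if_neg (Ne.symm hjk)]
  have e3 : (∑ b, inY (s j b) * inY (t b l)) = 0 := by rw [hA j l, if_neg hjl]
  have e4 : (∑ a, inY (t k a) * inY (s a i)) = 0 := by rw [hB k i, if_neg (Ne.symm hik)]
  -- big zero
  set c1 : MvPowerSeries (Fin 2) A := Xv * Yv * (Xv + Yv) with hc1
  set c2 : MvPowerSeries (Fin 2) A := Xv * Yv * (Yv - Xv) with hc2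
  set c3 : MvPowerSeries (Fin 2) A := Xv ^ 2 * Yv ^ 2 with hc3
  have hC1 : ∀ x, x * c1 = c1 * x := fun x => by
    rw [hc1]
    exact (((x.commute_X 0).mul_right (x.commute_X 1)).mul_right
      ((x.commute_X 0).add_right (x.commute_X 1))).eq
  have hC2 : ∀ x, x * c2 = c2 * x := fun x => by
    rw [hc2]
    exact (((x.commute_X 0).mul_right (x.commute_X 1)).mul_right
      ((x.commute_X 1).sub_right (x.commute_X 0))).eq
  have hC3 : ∀ x, x * c3 = c3 * x := fun x => by
    rw [hc3]
    exact (((x.commute_X 0).pow_right 2).mul_right ((x.commute_X 1).pow_right 2)).eq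
  have hsplit : ∀ a b : Fin N, quatRHS s i j a b
      = c1 * (inX (s a j) * inY (s i b)) - c1 * (inY (s a j) * inX (s i b))
        - (c2 * (inX (s i a) * inY (s j b)) - c2 * (inY (s a i) * inX (s b j)))
        + (c3 * (inX (s a i) * inY (s j b)) - c3 * (inY (s a i) * inX (s j b))) := by
    intro a b
    rw [hc1, hc2, hc3]
    simp only [quatRHS, mul_sub]
  have bigzero : (∑ a, ∑ b, inY (t k a) * quatRHS s i j a b * inY (t b l)) = 0 := by
    simp only [hsplit, mul_sub, mul_add, sub_mul, add_mul, Finset.sum_sub_distrib,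
      Finset.sum_add_distrib]
    rw [kill c1 hC1 (fun a => inX (s a j)) (fun b => inY (s i b)) (Or.inr e1),
      kill c1 hC1 (fun a => inY (s a j)) (fun b => inX (s i b)) (Or.inl e2),
      kill c2 hC2 (fun a => inX (s i a)) (fun b => inY (s j b)) (Or.inr e3),
      kill c2 hC2 (fun a => inY (s a i)) (fun b => inX (s b j)) (Or.inl e4),
      kill c3 hC3 (fun a => inX (s a i)) (fun b => inY (s j b)) (Or.inr e3),
      kill c3 hC3 (fun a => inY (s a i)) (fun b => inX (s j b)) (Or.inl e4)]
    simp
  -- quaternary relation rephrased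
  have hq' : ∀ a b : Fin N,
      ((Yv : MvPowerSeries (Fin 2) A) ^ 2 - Xv ^ 2) *
        (inX (s i j) * inY (s a b) - inY (s a b) * inX (s i j)) = quatRHS s i j a b := by
    intro a b
    rw [← Ring.lie_def]
    exact hq i j a b
  -- grand conclusion
  have grand : ((Yv : MvPowerSeries (Fin 2) A) ^ 2 - Xv ^ 2) *
      (inX (s i j) * inY (t k l) - inY (t k l) * inX (s i j)) = 0 := by
    have hneg : inX (s i j) * inY (t k l) - inY (t k l) * inX (s i j)
        = -(∑ a, ∑ b, inY (t k a) *
            (inX (s i j) * inY (s a b) - inY (s a b) * inX (s i j)) * inY (t b l)) := by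
      rw [stepA, neg_sub]
    rw [hneg, mul_neg, neg_eq_zero]
    have push : ((Yv : MvPowerSeries (Fin 2) A) ^ 2 - Xv ^ 2) *
        (∑ a, ∑ b, inY (t k a) *
          (inX (s i j) * inY (s a b) - inY (s a b) * inX (s i j)) * inY (t b l))
        = ∑ a, ∑ b, inY (t k a) * quatRHS s i j a b * inY (t b l) := by
      rw [Finset.mul_sum]
      refine Finset.sum_congr rfl fun a _ => ?_
      rw [Finset.mul_sum]
      refine Finset.sum_congr rfl fun b _ => ?_
      rw [← hq' a b]
      simp only [← mul_assoc, hW]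
    rw [push]
    exact bigzero
  have hz := cancel_lemma _ grand
  exact sub_eq_zero.mp hz

end Main
theorem statement_1 (N : ℕ)
    (St : Matrix (Fin N) (Fin N) (PowerSeries (Yt N)))
    (hSt1 : Matrix.of (sY N) * St = 1) (hSt2 : St * Matrix.of (sY N) = 1)
    (i j k l : Fin N) (hik : i ≠ k) (hil : i ≠ l) (hjk : j ≠ k) (hjl : j ≠ l) :
    ∀ m n : ℕ,
      Commute (PowerSeries.coeff m (sY N i j))
        (PowerSeries.coeff n (St k l)) := by
  have h1 : ∀ a b : Fin N, (∑ c, sY N a c * St c b) = if a = b then 1 else 0 := by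
    intro a b
    have h := congrFun (congrFun hSt1 a) b
    simp only [Matrix.mul_apply, Matrix.one_apply, Matrix.of_apply] at h
    exact h
  have h2 : ∀ a b : Fin N, (∑ c, St a c * sY N c b) = if a = b then 1 else 0 := by
    intro a b
    have h := congrFun (congrFun hSt2 a) b
    simp only [Matrix.mul_apply, Matrix.one_apply, Matrix.of_apply] at h
    exact h
  have key := main_calc (sY N) (fun a b => St a b) (quat_sY N) h1 h2
    i j k l hik hil hjk hjl
  intro m n
  have hc := congrArg
    (MvPowerSeries.coeff (Finsupp.single 0 m + Finsupp.single 1 n)) key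
  have hL := coeff_inVar_mul_inVar (A := Yt N) 0 1 (by decide) (sY N i j) (St k l) m n
  have hR := coeff_inVar_mul_inVar (A := Yt N) 1 0 (by decide) (St k l) (sY N i j) n m
  rw [add_comm] at hR
  rw [hL, hR] at hc
  exact hc

end TY
end
end

section
/- The automorphism ζ_N of the extended twisted Yangian X_N determined by ζ_N(s_{ij}(u)) = s̃_{i'j'}(−u−N/2) (where i' = N+1−i) satisfies ζ_N(e_{ij}(u)) = f̃_{i'j'}(−u−N/2), ζ_N(f_{ji}(u)) = ẽ_{j'i'}(−u−N/2) for 1 ≤ i < j ≤ N, and ζ_N(d_k(u)) = d̃_{k'}(−u−N/2) for 1 ≤ k ≤ N. In particular, ζ_N(e_i(u)) = −f_{N−i}(−u−N/2) and ζ_N(f_i(u)) = −e_{N−i}(−u−N/2) for 1 ≤ i < N. -/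
noncomputable section

namespace TY

variable {A : Type*} [Ring A] [Algebra ℂ A]

/-! ### Auxiliary material for `statement_6` -/

section AuxScalar

/-- Scalar coefficients appearing in `shiftVar`. -/
def phiC (c : ℂ) (n r : ℕ) : ℂ :=
  if r ≤ n then (-1 : ℂ) ^ (n - r) * ((n - 1).choose (n - r) : ℂ) * c ^ (n - r) else 0

/-- The substitution series `x (1 + c x)⁻¹`. -/
def qsC (c : ℂ) : PowerSeries ℂ :=
  PowerSeries.mk fun m => if m = 0 then 0 else (-c) ^ (m - 1)

lemma phiC_zero_of_gt {c : ℂ} {n r : ℕ} (h : n < r) : phiC c n r = 0 :=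
  if_neg (by omega)

lemma natsum_choose {r n : ℕ} (h : r + 1 ≤ n) :
    ∑ i ∈ Finset.Ico r n, (i - 1).choose (i - r) = (n - 1).choose (n - (r + 1)) := by
  rcases Nat.eq_zero_or_pos r with hr | hr
  · subst hr
    rw [show Finset.Ico 0 n = Finset.range n from (Finset.range_eq_Ico n).symm]
    rw [Finset.sum_eq_single_of_mem 0 (Finset.mem_range.mpr (by omega))
      (fun b _ hb => Nat.choose_eq_zero_of_lt (by omega))]
    simp [Nat.choose_self]
  · have h1 : ∀ i ∈ Finset.Ico r n, (i - 1).choose (i - r) = (i - 1).choose (r - 1) := by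
      intro i hi
      rw [Finset.mem_Ico] at hi
      rw [show i - r = (i - 1) - (r - 1) by omega, Nat.choose_symm (by omega)]
    rw [Finset.sum_congr rfl h1, Finset.sum_Ico_eq_sum_range]
    have h2 : ∀ j ∈ Finset.range (n - r),
        (r + j - 1).choose (r - 1) = (j + (r - 1)).choose (r - 1) := by
      intro j _
      congr 1
      omega
    rw [Finset.sum_congr rfl h2, show n - r = (n - r - 1) + 1 by omega,
      Nat.sum_range_add_choose]
    rw [show n - r - 1 + (r - 1) + 1 = n - 1 by omega, show (r - 1) + 1 = r by omega,
      show n - (r + 1) = (n - 1) - r by omega, Nat.choose_symm (by omega)]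

lemma coeff_qsC_pow (c : ℂ) (r n : ℕ) :
    PowerSeries.coeff n (qsC c ^ r) = phiC c n r := by
  induction r generalizing n with
  | zero =>
    rw [pow_zero, PowerSeries.coeff_one, phiC, if_pos (Nat.zero_le n)]
    rcases Nat.eq_zero_or_pos n with h | h
    · subst h; simp
    · rw [if_neg (by omega), Nat.choose_eq_zero_of_lt (by omega)]; simp
  | succ r ih =>
    rw [pow_succ, PowerSeries.coeff_mul, Finset.Nat.sum_antidiagonal_eq_sum_range_succ_mk]
    have hq : ∀ m, PowerSeries.coeff m (qsC c) = if m = 0 then 0 else (-c) ^ (m - 1) := by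
      intro m; simp [qsC]
    by_cases hn : r + 1 ≤ n
    · have hsub : Finset.Ico r n ⊆ Finset.range (n + 1) := by
        intro x hx
        rw [Finset.mem_Ico] at hx
        exact Finset.mem_range.mpr (by omega)
      have hv : ∀ i ∈ Finset.range (n + 1), i ∉ Finset.Ico r n →
          PowerSeries.coeff i (qsC c ^ r) * PowerSeries.coeff (n - i) (qsC c) = 0 := by
        intro i hi hni
        rw [Finset.mem_range] at hi
        rw [Finset.mem_Ico] at hni
        rcases lt_or_ge i r with h1 | h1
        · rw [ih, phiC_zero_of_gt h1, zero_mul]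
        · have hin : i = n := by omega
          rw [hq, hin, Nat.sub_self, if_pos rfl, mul_zero]
      rw [← Finset.sum_subset hsub hv]
      have hterm : ∀ i ∈ Finset.Ico r n,
          PowerSeries.coeff i (qsC c ^ r) * PowerSeries.coeff (n - i) (qsC c)
            = (((i - 1).choose (i - r) : ℕ) : ℂ) * ((-1 : ℂ) ^ (n - 1 - r) * c ^ (n - 1 - r)) := by
        intro i hi
        rw [Finset.mem_Ico] at hi
        rw [ih, hq, if_neg (by omega), phiC, if_pos hi.1]
        have e1 : (i - r) + (n - i - 1) = n - 1 - r := by omega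
        calc (-1 : ℂ) ^ (i - r) * (((i - 1).choose (i - r) : ℕ) : ℂ) * c ^ (i - r)
              * ((-c) ^ (n - i - 1))
            = (((i - 1).choose (i - r) : ℕ) : ℂ)
              * ((-1 : ℂ) ^ ((i - r) + (n - i - 1)) * c ^ ((i - r) + (n - i - 1))) := by
              rw [pow_add, pow_add, neg_pow c]; ring
          _ = _ := by rw [e1]
      rw [Finset.sum_congr rfl hterm, ← Finset.sum_mul, ← Nat.cast_sum, natsum_choose hn,
        phiC, if_pos hn, show n - (r + 1) = n - 1 - r by omega]
      ring
    · rw [phiC, if_neg hn]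
      refine Finset.sum_eq_zero fun i hi => ?_
      rw [Finset.mem_range] at hi
      rcases lt_or_ge i r with h1 | h1
      · rw [ih, phiC_zero_of_gt h1, zero_mul]
      · rw [hq, if_pos (by omega), mul_zero]

lemma phiC_conv (c : ℂ) (p q n : ℕ) :
    (∑ x ∈ Finset.HasAntidiagonal.antidiagonal n, phiC c x.1 p * phiC c x.2 q) = phiC c n (p + q) := by
  have h := PowerSeries.coeff_mul n (qsC c ^ p) (qsC c ^ q)
  simp only [coeff_qsC_pow] at h
  rw [← h, ← pow_add, coeff_qsC_pow]

end AuxScalar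

section AuxSeries

lemma coeff_negVar (f : PowerSeries A) (n : ℕ) :
    PowerSeries.coeff n (negVar f) = ((-1 : ℂ) ^ n) • PowerSeries.coeff n f := by
  simp [negVar]

lemma coeff_shiftVar (c : ℂ) (f : PowerSeries A) (n : ℕ) :
    PowerSeries.coeff n (shiftVar c f)
      = ∑ r ∈ Finset.range (n + 1), phiC c n r • PowerSeries.coeff r f := by
  simp only [shiftVar, PowerSeries.coeff_mk]
  refine Finset.sum_congr rfl fun r hr => ?_
  rw [phiC, if_pos (Nat.lt_succ_iff.mp (Finset.mem_range.mp hr))]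

lemma negVar_zero : negVar (0 : PowerSeries A) = 0 := by
  ext n; simp [coeff_negVar]

lemma negVar_one : negVar (1 : PowerSeries A) = 1 := by
  ext n
  rcases n with _ | n <;> simp [coeff_negVar, PowerSeries.coeff_one]

lemma negVar_add (f g : PowerSeries A) : negVar (f + g) = negVar f + negVar g := by
  ext n; simp [coeff_negVar, smul_add]

lemma negVar_mul (f g : PowerSeries A) : negVar (f * g) = negVar f * negVar g := by
  ext n
  simp only [coeff_negVar, PowerSeries.coeff_mul, Finset.smul_sum]
  refine Finset.sum_congr rfl fun x hx => ?_
  rw [smul_mul_smul_comm, ← pow_add, Finset.HasAntidiagonal.mem_antidiagonal.mp hx]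

lemma shiftVar_zero (c : ℂ) : shiftVar c (0 : PowerSeries A) = 0 := by
  ext n; simp [coeff_shiftVar]

lemma shiftVar_add (c : ℂ) (f g : PowerSeries A) :
    shiftVar c (f + g) = shiftVar c f + shiftVar c g := by
  ext n
  simp [coeff_shiftVar, smul_add, Finset.sum_add_distrib]

lemma shiftVar_one (c : ℂ) : shiftVar c (1 : PowerSeries A) = 1 := by
  ext n
  rw [coeff_shiftVar, Finset.sum_eq_single 0
    (fun r _ hr => by rw [PowerSeries.coeff_one, if_neg hr, smul_zero])
    (fun h => absurd (Finset.mem_range.mpr (Nat.succ_pos n)) h)]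
  cases n with
  | zero => simp [phiC]
  | succ m =>
    rw [PowerSeries.coeff_one, PowerSeries.coeff_one, if_pos rfl,
      if_neg (Nat.succ_ne_zero m), phiC, if_pos (Nat.zero_le _), Nat.sub_zero,
      Nat.succ_sub_one, Nat.choose_eq_zero_of_lt (by omega)]
    simp

lemma sum_triangle {M : Type*} [AddCommMonoid M] (n : ℕ) (G : ℕ → ℕ → M)
    (hG : ∀ p q, n < p + q → G p q = 0) :
    ∑ r ∈ Finset.range (n + 1), ∑ x ∈ Finset.HasAntidiagonal.antidiagonal r, G x.1 x.2
      = ∑ p ∈ Finset.range (n + 1), ∑ q ∈ Finset.range (n + 1), G p q := by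
  classical
  have hdisj : (↑(Finset.range (n + 1)) : Set ℕ).PairwiseDisjoint Finset.HasAntidiagonal.antidiagonal := by
    intro a _ b _ hab
    refine Finset.disjoint_left.mpr fun x hxa hxb => hab ?_
    rw [Finset.HasAntidiagonal.mem_antidiagonal] at hxa hxb
    exact hxa ▸ hxb
  rw [← Finset.sum_biUnion hdisj, ← Finset.sum_product']
  refine Finset.sum_subset ?_ ?_
  · intro x hx
    rw [Finset.mem_biUnion] at hx
    obtain ⟨r, hr, hxr⟩ := hx
    rw [Finset.mem_range] at hr
    rw [Finset.HasAntidiagonal.mem_antidiagonal] at hxr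
    rw [Finset.mem_product, Finset.mem_range, Finset.mem_range]
    omega
  · intro x _ hx
    refine hG x.1 x.2 ?_
    by_contra hc
    push_neg at hc
    exact hx (Finset.mem_biUnion.mpr ⟨x.1 + x.2, Finset.mem_range.mpr (by omega),
      Finset.HasAntidiagonal.mem_antidiagonal.mpr rfl⟩)

lemma sum_extend {M : Type*} [AddCommMonoid M] {m n : ℕ} (h : m ≤ n) (F : ℕ → M)
    (h0 : ∀ p, m < p → F p = 0) :
    ∑ p ∈ Finset.range (m + 1), F p = ∑ p ∈ Finset.range (n + 1), F p :=
  Finset.sum_subset (Finset.range_subset_range.mpr (by omega))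
    (fun p _ hp => h0 p (by rw [Finset.mem_range] at hp; omega))

lemma shiftVar_mul (c : ℂ) (f g : PowerSeries A) :
    shiftVar c (f * g) = shiftVar c f * shiftVar c g := by
  ext n
  have hL : PowerSeries.coeff n (shiftVar c (f * g))
      = ∑ p ∈ Finset.range (n + 1), ∑ q ∈ Finset.range (n + 1),
          (phiC c n (p + q)) • (PowerSeries.coeff p f * PowerSeries.coeff q g) := by
    rw [coeff_shiftVar]
    simp only [PowerSeries.coeff_mul, Finset.smul_sum]
    rw [← sum_triangle n
      (fun p q => (phiC c n (p + q)) • (PowerSeries.coeff p f * PowerSeries.coeff q g))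
      (fun p q h => by
        show phiC c n (p + q) • (PowerSeries.coeff p f * PowerSeries.coeff q g) = 0
        rw [phiC_zero_of_gt h, zero_smul])]
    exact Finset.sum_congr rfl fun r hr => Finset.sum_congr rfl fun x hx => by
      rw [Finset.HasAntidiagonal.mem_antidiagonal.mp hx]
  rw [hL, PowerSeries.coeff_mul]
  have step1 : ∀ x ∈ Finset.HasAntidiagonal.antidiagonal n,
      PowerSeries.coeff x.1 (shiftVar c f) * PowerSeries.coeff x.2 (shiftVar c g)
        = ∑ p ∈ Finset.range (n + 1), ∑ q ∈ Finset.range (n + 1),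
            (phiC c x.1 p * phiC c x.2 q)
              • (PowerSeries.coeff p f * PowerSeries.coeff q g) := by
    intro x hx
    have hxn := Finset.HasAntidiagonal.mem_antidiagonal.mp hx
    rw [coeff_shiftVar, coeff_shiftVar, Finset.sum_mul_sum]
    have inner : ∀ p,
        ∑ q ∈ Finset.range (x.2 + 1),
            (phiC c x.1 p • PowerSeries.coeff p f) * (phiC c x.2 q • PowerSeries.coeff q g)
          = ∑ q ∈ Finset.range (n + 1),
              (phiC c x.1 p * phiC c x.2 q)
                • (PowerSeries.coeff p f * PowerSeries.coeff q g) := by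
      intro p
      rw [Finset.sum_congr rfl (fun q _ => smul_mul_smul_comm (phiC c x.1 p) _ (phiC c x.2 q) _)]
      exact sum_extend (by omega) _
        (fun q hq => by rw [phiC_zero_of_gt hq, mul_zero, zero_smul])
    rw [Finset.sum_congr rfl (fun p _ => inner p)]
    refine sum_extend (by omega) _ (fun p hp => ?_)
    exact Finset.sum_eq_zero fun q _ => by rw [phiC_zero_of_gt hp, zero_mul, zero_smul]
  rw [Finset.sum_congr rfl step1]
  refine Eq.symm ?_
  rw [Finset.sum_comm]
  refine Finset.sum_congr rfl fun p _ => ?_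
  rw [Finset.sum_comm]
  refine Finset.sum_congr rfl fun q _ => ?_
  rw [← Finset.sum_smul, phiC_conv]

/-- The substitution `f(u) ↦ f(-u-c)` as a ring homomorphism. -/
def tauHom (c : ℂ) : PowerSeries A →+* PowerSeries A where
  toFun f := shiftVar c (negVar f)
  map_one' := by show shiftVar c (negVar 1) = 1; rw [negVar_one, shiftVar_one]
  map_mul' f g := by
    show shiftVar c (negVar (f * g)) = shiftVar c (negVar f) * shiftVar c (negVar g)
    rw [negVar_mul, shiftVar_mul]
  map_zero' := by show shiftVar c (negVar 0) = 0; rw [negVar_zero, shiftVar_zero]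
  map_add' f g := by
    show shiftVar c (negVar (f + g)) = shiftVar c (negVar f) + shiftVar c (negVar g)
    rw [negVar_add, shiftVar_add]

@[simp] lemma tauHom_apply (c : ℂ) (f : PowerSeries A) :
    tauHom c f = shiftVar c (negVar f) := rfl

end AuxSeries


section AuxMatrix

variable {R : Type*} [Ring R] {n : ℕ}

/-- Upper unitriangular. -/
def IsUpperUni (U : Matrix (Fin n) (Fin n) R) : Prop :=
  (∀ i, U i i = 1) ∧ ∀ i j : Fin n, j < i → U i j = 0

/-- Lower unitriangular. -/
def IsLowerUni (L : Matrix (Fin n) (Fin n) R) : Prop :=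
  (∀ i, L i i = 1) ∧ ∀ i j : Fin n, i < j → L i j = 0

lemma IsUpperUni.mul {U V : Matrix (Fin n) (Fin n) R}
    (hU : IsUpperUni U) (hV : IsUpperUni V) : IsUpperUni (U * V) := by
  constructor
  · intro i
    rw [Matrix.mul_apply, Finset.sum_eq_single i
      (fun k _ hk => ?_) (fun h => absurd (Finset.mem_univ i) h)]
    · rw [hU.1, hV.1, one_mul]
    · rcases lt_or_gt_of_ne hk with h | h
      · rw [hU.2 i k h, zero_mul]
      · rw [hV.2 k i h, mul_zero]
  · intro i j hji
    rw [Matrix.mul_apply]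
    refine Finset.sum_eq_zero fun k _ => ?_
    rcases lt_or_ge k i with h | h
    · rw [hU.2 i k h, zero_mul]
    · rw [hV.2 k j (lt_of_lt_of_le hji h), mul_zero]

lemma IsLowerUni.mul {U V : Matrix (Fin n) (Fin n) R}
    (hU : IsLowerUni U) (hV : IsLowerUni V) : IsLowerUni (U * V) := by
  constructor
  · intro i
    rw [Matrix.mul_apply, Finset.sum_eq_single i
      (fun k _ hk => ?_) (fun h => absurd (Finset.mem_univ i) h)]
    · rw [hU.1, hV.1, one_mul]
    · rcases lt_or_gt_of_ne hk with h | h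
      · rw [hV.2 k i h, mul_zero]
      · rw [hU.2 i k h, zero_mul]
  · intro i j hij
    rw [Matrix.mul_apply]
    refine Finset.sum_eq_zero fun k _ => ?_
    rcases lt_or_ge k j with h | h
    · rw [hV.2 k j h, mul_zero]
    · rw [hU.2 i k (lt_of_lt_of_le hij h), zero_mul]

lemma isUpperUni_of_mul_eq_one {U V : Matrix (Fin n) (Fin n) R}
    (hU : IsUpperUni U) (h : V * U = 1) : IsUpperUni V := by
  have key : ∀ m : ℕ, ∀ j i : Fin n, (j : ℕ) = m → j ≤ i →
      V i j = if i = j then 1 else 0 := by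
    intro m
    induction m using Nat.strong_induction_on with
    | _ m IH =>
      intro j i hjm hji
      have h1 : (V * U) i j = if i = j then 1 else 0 := by rw [h, Matrix.one_apply]
      rw [Matrix.mul_apply, Finset.sum_eq_single j ?_
        (fun hj => absurd (Finset.mem_univ j) hj)] at h1
      · rwa [hU.1, mul_one] at h1
      · intro k _ hk
        rcases lt_or_ge j k with hlt | hle
        · rw [hU.2 k j hlt, mul_zero]
        · have hkj : k < j := lt_of_le_of_ne hle hk
          have hki : k < i := lt_of_lt_of_le hkj hji
          rw [IH (k : ℕ) (by rw [← hjm]; exact hkj) k i rfl (le_of_lt hki),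
            if_neg (by intro hik; subst hik; exact absurd hki (lt_irrefl _)), zero_mul]
  constructor
  · intro i
    have := key (i : ℕ) i i rfl le_rfl
    rwa [if_pos rfl] at this
  · intro i j hji
    have := key (j : ℕ) j i rfl (le_of_lt hji)
    rwa [if_neg (ne_of_gt hji)] at this

/-- Reversal of rows and columns. -/
def revMat (M : Matrix (Fin n) (Fin n) R) : Matrix (Fin n) (Fin n) R :=
  M.submatrix Fin.rev Fin.rev

lemma revMat_apply (M : Matrix (Fin n) (Fin n) R) (i j : Fin n) :
    revMat M i j = M i.rev j.rev := rfl

lemma revMat_mul (M N : Matrix (Fin n) (Fin n) R) :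
    revMat (M * N) = revMat M * revMat N :=
  (Matrix.submatrix_mul_equiv M N Fin.rev (Fin.revPerm) Fin.rev).symm

lemma revMat_one : revMat (1 : Matrix (Fin n) (Fin n) R) = 1 :=
  Matrix.submatrix_one_equiv (Fin.revPerm)

lemma IsLowerUni.rev {L : Matrix (Fin n) (Fin n) R} (hL : IsLowerUni L) :
    IsUpperUni (revMat L) :=
  ⟨fun i => hL.1 _, fun i j hji => hL.2 _ _ (Fin.rev_lt_rev.mpr hji)⟩

lemma IsUpperUni.rev {U : Matrix (Fin n) (Fin n) R} (hU : IsUpperUni U) :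
    IsLowerUni (revMat U) :=
  ⟨fun i => hU.1 _, fun i j hij => hU.2 _ _ (Fin.rev_lt_rev.mpr hij)⟩

lemma isLowerUni_of_revMat {L : Matrix (Fin n) (Fin n) R}
    (h : IsUpperUni (revMat L)) : IsLowerUni L := by
  constructor
  · intro i
    have := h.1 i.rev
    rwa [revMat_apply, Fin.rev_rev] at this
  · intro i j hij
    have := h.2 i.rev j.rev (Fin.rev_lt_rev.mpr hij)
    rwa [revMat_apply, Fin.rev_rev, Fin.rev_rev] at this

lemma isLowerUni_of_mul_eq_one {L V : Matrix (Fin n) (Fin n) R}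
    (hL : IsLowerUni L) (h : V * L = 1) : IsLowerUni V := by
  refine isLowerUni_of_revMat (isUpperUni_of_mul_eq_one hL.rev ?_)
  rw [← revMat_mul, h, revMat_one]

lemma IsUpperUni.map {S : Type*} [Ring S] {U : Matrix (Fin n) (Fin n) R}
    (φ : R →+* S) (hU : IsUpperUni U) : IsUpperUni (U.map ⇑φ) :=
  ⟨fun i => by rw [Matrix.map_apply, hU.1, map_one],
   fun i j h => by rw [Matrix.map_apply, hU.2 i j h, map_zero]⟩

lemma IsLowerUni.map {S : Type*} [Ring S] {L : Matrix (Fin n) (Fin n) R}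
    (φ : R →+* S) (hL : IsLowerUni L) : IsLowerUni (L.map ⇑φ) :=
  ⟨fun i => by rw [Matrix.map_apply, hL.1, map_one],
   fun i j h => by rw [Matrix.map_apply, hL.2 i j h, map_zero]⟩

lemma gauss_unique {L1 L2 U1 U2 L2' U1' : Matrix (Fin n) (Fin n) R} {d1 d2 d1' : Fin n → R}
    (hL1 : IsLowerUni L1) (hL2 : IsLowerUni L2) (hU1 : IsUpperUni U1) (hU2 : IsUpperUni U2)
    (hL2a : L2 * L2' = 1) (hL2b : L2' * L2 = 1)
    (hU1a : U1 * U1' = 1) (hU1b : U1' * U1 = 1)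
    (hd : ∀ k, d1 k * d1' k = 1 ∧ d1' k * d1 k = 1)
    (h : L1 * Matrix.diagonal d1 * U1 = L2 * Matrix.diagonal d2 * U2) :
    L1 = L2 ∧ d1 = d2 ∧ U1 = U2 := by
  have hL2' : IsLowerUni L2' := isLowerUni_of_mul_eq_one hL2 hL2b
  have hU1' : IsUpperUni U1' := isUpperUni_of_mul_eq_one hU1 hU1b
  have hWl : IsLowerUni (L2' * L1) := hL2'.mul hL1
  have hZu : IsUpperUni (U2 * U1') := hU2.mul hU1'
  have hmain : (L2' * L1) * Matrix.diagonal d1 = Matrix.diagonal d2 * (U2 * U1') := by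
    calc (L2' * L1) * Matrix.diagonal d1
        = (L2' * L1 * Matrix.diagonal d1) * (U1 * U1') := by rw [hU1a, mul_one]
      _ = L2' * (L1 * Matrix.diagonal d1 * U1) * U1' := by simp only [mul_assoc]
      _ = L2' * (L2 * Matrix.diagonal d2 * U2) * U1' := by rw [h]
      _ = (L2' * L2) * (Matrix.diagonal d2 * (U2 * U1')) := by simp only [mul_assoc]
      _ = Matrix.diagonal d2 * (U2 * U1') := by rw [hL2b, one_mul]
  have hentry : ∀ i j, (L2' * L1) i j * d1 j = d2 i * (U2 * U1') i j := by
    intro i j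
    have := congrFun (congrFun hmain i) j
    rwa [Matrix.mul_diagonal, Matrix.diagonal_mul] at this
  have hd12 : d1 = d2 := funext fun i => by
    have := hentry i i
    rwa [hWl.1, hZu.1, one_mul, mul_one] at this
  have hWone : L2' * L1 = 1 := by
    ext i j
    rcases lt_trichotomy i j with hij | hij | hij
    · rw [hWl.2 i j hij, Matrix.one_apply_ne (ne_of_lt hij)]
    · rw [hij, hWl.1, Matrix.one_apply_eq]
    · have h0 : (L2' * L1) i j * d1 j = 0 := by
        rw [hentry i j, hZu.2 i j hij, mul_zero]
      have h1 : (L2' * L1) i j = (L2' * L1) i j * (d1 j * d1' j) := by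
        rw [(hd j).1, mul_one]
      rw [Matrix.one_apply_ne (ne_of_gt hij), h1, ← mul_assoc, h0, zero_mul]
  have hZone : U2 * U1' = 1 := by
    ext i j
    rcases lt_trichotomy i j with hij | hij | hij
    · have h0 : d1 i * (U2 * U1') i j = 0 := by
        rw [hd12, ← hentry i j, hWl.2 i j hij, zero_mul]
      have h1 : (U2 * U1') i j = (d1' i * d1 i) * (U2 * U1') i j := by
        rw [(hd i).2, one_mul]
      rw [Matrix.one_apply_ne (ne_of_lt hij), h1, mul_assoc, h0, mul_zero]
    · rw [hij, hZu.1, Matrix.one_apply_eq]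
    · rw [hZu.2 i j hij, Matrix.one_apply_ne (ne_of_gt hij)]
  refine ⟨?_, hd12, ?_⟩
  · calc L1 = (L2 * L2') * L1 := by rw [hL2a, one_mul]
      _ = L2 * (L2' * L1) := mul_assoc _ _ _
      _ = L2 := by rw [hWone, mul_one]
  · calc U1 = (U2 * U1') * U1 := by rw [hZone, one_mul]
      _ = U2 * (U1' * U1) := mul_assoc _ _ _
      _ = U2 := by rw [hU1b, mul_one]

end AuxMatrix

set_option maxHeartbeats 2000000 in
theorem statement_6 {A : Type*} [Ring A] [Algebra ℂ A] {N : ℕ}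
    (s : Fin N → Fin N → PowerSeries A)
    (hconst : HasDeltaConst s) (hquat : QuatRel s)
    (d : Fin N → PowerSeries A) (e f : Fin N → Fin N → PowerSeries A)
    (hG : IsGaussDecomp s d e f)
    (St Et Ft : Matrix (Fin N) (Fin N) (PowerSeries A))
    (hSt1 : Matrix.of s * St = 1) (hSt2 : St * Matrix.of s = 1)
    (hEt1 : upperMat e * Et = 1) (hEt2 : Et * upperMat e = 1)
    (hFt1 : lowerMat f * Ft = 1) (hFt2 : Ft * lowerMat f = 1)
    (dt : Fin N → PowerSeries A)
    (hdt : ∀ k, d k * dt k = 1 ∧ dt k * d k = 1)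
    (ζ : A →ₐ[ℂ] A)
    (hζ : ∀ i j : Fin N,
      PowerSeries.map (ζ : A →+* A) (s i j)
        = shiftVar ((N : ℂ) / 2) (negVar (St i.rev j.rev))) :
    (∀ i j : Fin N, i < j →
        PowerSeries.map (ζ : A →+* A) (e i j)
          = shiftVar ((N : ℂ) / 2) (negVar (Ft i.rev j.rev)))
    ∧ (∀ i j : Fin N, i < j →
        PowerSeries.map (ζ : A →+* A) (f j i)
          = shiftVar ((N : ℂ) / 2) (negVar (Et j.rev i.rev)))
    ∧ (∀ k : Fin N,
        PowerSeries.map (ζ : A →+* A) (d k)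
          = shiftVar ((N : ℂ) / 2) (negVar (dt k.rev)))
    ∧ (∀ (k : ℕ) (hk : k + 1 < N),
        PowerSeries.map (ζ : A →+* A) (e ⟨k, by omega⟩ ⟨k + 1, hk⟩)
          = -shiftVar ((N : ℂ) / 2)
              (negVar (f ⟨N - k - 1, by omega⟩ ⟨N - k - 2, by omega⟩)))
    ∧ (∀ (k : ℕ) (hk : k + 1 < N),
        PowerSeries.map (ζ : A →+* A) (f ⟨k + 1, hk⟩ ⟨k, by omega⟩)
          = -shiftVar ((N : ℂ) / 2)
              (negVar (e ⟨N - k - 2, by omega⟩ ⟨N - k - 1, by omega⟩))) := by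
  set c : ℂ := (N : ℂ) / 2 with hc
  -- diagonal inverses
  have hdd : Matrix.diagonal d * Matrix.diagonal dt = 1 := by
    rw [Matrix.diagonal_mul_diagonal,
      show (fun k => d k * dt k) = fun _ => (1 : PowerSeries A) from funext fun k => (hdt k).1,
      Matrix.diagonal_one]
  have hdd' : Matrix.diagonal dt * Matrix.diagonal d = 1 := by
    rw [Matrix.diagonal_mul_diagonal,
      show (fun k => dt k * d k) = fun _ => (1 : PowerSeries A) from funext fun k => (hdt k).2,
      Matrix.diagonal_one]
  have hSK : Matrix.of s * (Et * Matrix.diagonal dt * Ft) = 1 := by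
    rw [hG.decomp]
    calc lowerMat f * Matrix.diagonal d * upperMat e * (Et * Matrix.diagonal dt * Ft)
        = lowerMat f * ((Matrix.diagonal d * ((upperMat e * Et) * Matrix.diagonal dt)) * Ft) := by
          simp only [mul_assoc]
      _ = lowerMat f * Ft := by rw [hEt1, one_mul, hdd, one_mul]
      _ = 1 := hFt1
  have hKS : (Et * Matrix.diagonal dt * Ft) * Matrix.of s = 1 := by
    rw [hG.decomp]
    calc Et * Matrix.diagonal dt * Ft * (lowerMat f * Matrix.diagonal d * upperMat e)
        = Et * ((Matrix.diagonal dt * ((Ft * lowerMat f) * Matrix.diagonal d)) * upperMat e) := by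
          simp only [mul_assoc]
      _ = Et * upperMat e := by rw [hFt2, one_mul, hdd', one_mul]
      _ = 1 := hEt2
  have hStK : St = Et * Matrix.diagonal dt * Ft := by
    calc St = St * (Matrix.of s * (Et * Matrix.diagonal dt * Ft)) := by rw [hSK, mul_one]
      _ = (St * Matrix.of s) * (Et * Matrix.diagonal dt * Ft) := (mul_assoc _ _ _).symm
      _ = Et * Matrix.diagonal dt * Ft := by rw [hSt2, one_mul]
  have hUe : IsUpperUni (upperMat e) := by
    constructor
    · intro i
      show (if i = i then 1 else if i < i then e i i else 0) = 1
      rw [if_pos rfl]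
    · intro i j hji
      show (if i = j then 1 else if i < j then e i j else 0) = 0
      rw [if_neg (ne_of_gt hji), if_neg (lt_asymm hji)]
  have hLf : IsLowerUni (lowerMat f) := by
    constructor
    · intro i
      show (if i = i then 1 else if i < i then f i i else 0) = 1
      rw [if_pos rfl]
    · intro i j hij
      show (if i = j then 1 else if j < i then f i j else 0) = 0
      rw [if_neg (ne_of_lt hij), if_neg (lt_asymm hij)]
  have hEtU : IsUpperUni Et := isUpperUni_of_mul_eq_one hUe hEt2
  have hFtL : IsLowerUni Ft := isLowerUni_of_mul_eq_one hLf hFt2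
  have hMat : (Matrix.of s).map ⇑(PowerSeries.map (ζ : A →+* A))
      = (revMat St).map ⇑(tauHom c) := by
    refine Matrix.ext fun i j => ?_
    rw [Matrix.map_apply, Matrix.map_apply, revMat_apply]
    exact hζ i j
  have hrd : revMat (Matrix.diagonal dt) = Matrix.diagonal (fun k : Fin N => dt k.rev) := by
    refine Matrix.ext fun i j => ?_
    rw [revMat_apply]
    rcases eq_or_ne i j with rfl | hij
    · rw [Matrix.diagonal_apply_eq, Matrix.diagonal_apply_eq]
    · rw [Matrix.diagonal_apply_ne _ (fun hh => hij (Fin.rev_inj.mp hh)),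
        Matrix.diagonal_apply_ne _ hij]
  have hL : (Matrix.of s).map ⇑(PowerSeries.map (ζ : A →+* A))
      = ((lowerMat f).map ⇑(PowerSeries.map (ζ : A →+* A)))
          * Matrix.diagonal (fun k => PowerSeries.map (ζ : A →+* A) (d k))
          * ((upperMat e).map ⇑(PowerSeries.map (ζ : A →+* A))) := by
    rw [hG.decomp, Matrix.map_mul, Matrix.map_mul,
      Matrix.diagonal_map (map_zero (PowerSeries.map (ζ : A →+* A)))]
  have hR : (revMat St).map ⇑(tauHom c)
      = ((revMat Et).map ⇑(tauHom c))
          * Matrix.diagonal (fun k : Fin N => tauHom c (dt k.rev))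
          * ((revMat Ft).map ⇑(tauHom c)) := by
    rw [hStK, revMat_mul, revMat_mul, Matrix.map_mul, Matrix.map_mul, hrd,
      Matrix.diagonal_map (map_zero (tauHom c : PowerSeries A →+* PowerSeries A))]
  have heq : ((lowerMat f).map ⇑(PowerSeries.map (ζ : A →+* A)))
      * Matrix.diagonal (fun k => PowerSeries.map (ζ : A →+* A) (d k))
      * ((upperMat e).map ⇑(PowerSeries.map (ζ : A →+* A)))
      = ((revMat Et).map ⇑(tauHom c))
          * Matrix.diagonal (fun k : Fin N => tauHom c (dt k.rev))
          * ((revMat Ft).map ⇑(tauHom c)) := by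
    rw [← hL, ← hR]
    exact hMat
  have hL2a : ((revMat Et).map ⇑(tauHom c)) * ((revMat (upperMat e)).map ⇑(tauHom c)) = 1 := by
    rw [← Matrix.map_mul, ← revMat_mul, hEt2, revMat_one,
      Matrix.map_one _ (map_zero (tauHom c : PowerSeries A →+* PowerSeries A))
        (map_one (tauHom c : PowerSeries A →+* PowerSeries A))]
  have hL2b : ((revMat (upperMat e)).map ⇑(tauHom c)) * ((revMat Et).map ⇑(tauHom c)) = 1 := by
    rw [← Matrix.map_mul, ← revMat_mul, hEt1, revMat_one,
      Matrix.map_one _ (map_zero (tauHom c : PowerSeries A →+* PowerSeries A))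
        (map_one (tauHom c : PowerSeries A →+* PowerSeries A))]
  have hU1a : ((upperMat e).map ⇑(PowerSeries.map (ζ : A →+* A)))
      * (Et.map ⇑(PowerSeries.map (ζ : A →+* A))) = 1 := by
    rw [← Matrix.map_mul, hEt1,
      Matrix.map_one _ (map_zero (PowerSeries.map (ζ : A →+* A)))
        (map_one (PowerSeries.map (ζ : A →+* A)))]
  have hU1b : (Et.map ⇑(PowerSeries.map (ζ : A →+* A)))
      * ((upperMat e).map ⇑(PowerSeries.map (ζ : A →+* A))) = 1 := by
    rw [← Matrix.map_mul, hEt2,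
      Matrix.map_one _ (map_zero (PowerSeries.map (ζ : A →+* A)))
        (map_one (PowerSeries.map (ζ : A →+* A)))]
  have hdinv : ∀ k, (PowerSeries.map (ζ : A →+* A) (d k))
        * (PowerSeries.map (ζ : A →+* A) (dt k)) = 1
      ∧ (PowerSeries.map (ζ : A →+* A) (dt k))
          * (PowerSeries.map (ζ : A →+* A) (d k)) = 1 := fun k =>
    ⟨by rw [← map_mul, (hdt k).1, map_one], by rw [← map_mul, (hdt k).2, map_one]⟩
  obtain ⟨hLeq, hdeq, hUeq⟩ :=
    gauss_unique (R := PowerSeries A) (n := N)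
      (L1 := (lowerMat f).map ⇑(PowerSeries.map (ζ : A →+* A)))
      (L2 := (revMat Et).map ⇑(tauHom c))
      (U1 := (upperMat e).map ⇑(PowerSeries.map (ζ : A →+* A)))
      (U2 := (revMat Ft).map ⇑(tauHom c))
      (L2' := (revMat (upperMat e)).map ⇑(tauHom c))
      (U1' := Et.map ⇑(PowerSeries.map (ζ : A →+* A)))
      (d1 := fun k => PowerSeries.map (ζ : A →+* A) (d k))
      (d2 := fun k : Fin N => tauHom c (dt k.rev))
      (d1' := fun k => PowerSeries.map (ζ : A →+* A) (dt k))
      (hLf.map (PowerSeries.map (ζ : A →+* A))) (hEtU.rev.map (tauHom c))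
      (hUe.map (PowerSeries.map (ζ : A →+* A))) (hFtL.rev.map (tauHom c))
      hL2a hL2b hU1a hU1b hdinv heq
  have res1 : ∀ i j : Fin N, i < j →
      PowerSeries.map (ζ : A →+* A) (e i j) = shiftVar c (negVar (Ft i.rev j.rev)) := by
    intro i j hij
    have h1 := congrFun (congrFun hUeq i) j
    rw [Matrix.map_apply, Matrix.map_apply, revMat_apply,
      show (upperMat e) i j = e i j from by
        show (if i = j then 1 else if i < j then e i j else 0) = e i j
        rw [if_neg (ne_of_lt hij), if_pos hij]] at h1
    exact h1
  have res2 : ∀ i j : Fin N, i < j →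
      PowerSeries.map (ζ : A →+* A) (f j i) = shiftVar c (negVar (Et j.rev i.rev)) := by
    intro i j hij
    have h1 := congrFun (congrFun hLeq j) i
    rw [Matrix.map_apply, Matrix.map_apply, revMat_apply,
      show (lowerMat f) j i = f j i from by
        show (if j = i then 1 else if i < j then f j i else 0) = f j i
        rw [if_neg (ne_of_gt hij), if_pos hij]] at h1
    exact h1
  have res3 : ∀ k : Fin N,
      PowerSeries.map (ζ : A →+* A) (d k) = shiftVar c (negVar (dt k.rev)) := by
    intro k
    exact congrFun hdeq k
  refine ⟨res1, res2, res3, ?_, ?_⟩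
  · -- ζ(e_k) = -σ(f_{N-k-1, N-k-2})
    intro k hk
    have hik : (⟨k, by omega⟩ : Fin N) < ⟨k + 1, hk⟩ := Fin.mk_lt_mk.mpr (by omega)
    have h1 := res1 _ _ hik
    set a : Fin N := ⟨N - k - 1, by omega⟩ with ha
    set b : Fin N := ⟨N - k - 2, by omega⟩ with hb
    have hra : (⟨k, by omega⟩ : Fin N).rev = a := by
      rw [Fin.ext_iff, Fin.val_rev]
      show N - (k + 1) = N - k - 1
      omega
    have hrb : (⟨k + 1, hk⟩ : Fin N).rev = b := by
      rw [Fin.ext_iff, Fin.val_rev]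
      show N - (k + 1 + 1) = N - k - 2
      omega
    rw [hra, hrb] at h1
    have hab : a ≠ b := Fin.ne_of_val_ne (by show N - k - 1 ≠ N - k - 2; omega)
    have hba : b < a := Fin.mk_lt_mk.mpr (by omega)
    have hone : (Ft * lowerMat f) a b = 0 := by rw [hFt2]; exact Matrix.one_apply_ne hab
    rw [Matrix.mul_apply] at hone
    have hvanish : ∀ m ∈ (Finset.univ : Finset (Fin N)), m ∉ ({a, b} : Finset (Fin N)) →
        Ft a m * lowerMat f m b = 0 := by
      intro m _ hm
      simp only [Finset.mem_insert, Finset.mem_singleton] at hm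
      push_neg at hm
      rcases lt_or_ge (a : ℕ) (m : ℕ) with hma | hma
      · rw [hFtL.2 a m (Fin.lt_def.mpr hma), zero_mul]
      · have h2 : ¬ b < m := by
          rw [Fin.lt_def]
          have e1 : (m : ℕ) ≠ (a : ℕ) := fun hh => hm.1 (Fin.ext hh)
          show ¬ (N - k - 2 < (m : ℕ))
          have e2 : (m : ℕ) ≠ N - k - 2 := fun hh => hm.2 (Fin.ext hh)
          have e3 : (a : ℕ) = N - k - 1 := rfl
          omega
        have hz : lowerMat f m b = 0 := by
          show (if m = b then 1 else if b < m then f m b else 0) = 0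
          rw [if_neg hm.2, if_neg h2]
        rw [hz, mul_zero]
    rw [← Finset.sum_subset (Finset.subset_univ _) hvanish, Finset.sum_pair hab] at hone
    rw [hFtL.1, one_mul,
      show lowerMat f a b = f a b from by
        show (if a = b then 1 else if b < a then f a b else 0) = f a b
        rw [if_neg hab, if_pos hba],
      show lowerMat f b b = 1 from by
        show (if b = b then 1 else if b < b then f b b else 0) = 1
        rw [if_pos rfl],
      mul_one] at hone
    have hFab : Ft a b = - f a b := eq_neg_of_add_eq_zero_right hone
    rw [hFab] at h1
    rw [h1]
    exact map_neg (tauHom c : PowerSeries A →+* PowerSeries A) (f a b)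
  · -- ζ(f_k) = -σ(e_{N-k-2, N-k-1})
    intro k hk
    have hik : (⟨k, by omega⟩ : Fin N) < ⟨k + 1, hk⟩ := Fin.mk_lt_mk.mpr (by omega)
    have h1 := res2 _ _ hik
    set a : Fin N := ⟨N - k - 1, by omega⟩ with ha
    set b : Fin N := ⟨N - k - 2, by omega⟩ with hb
    have hra : (⟨k, by omega⟩ : Fin N).rev = a := by
      rw [Fin.ext_iff, Fin.val_rev]
      show N - (k + 1) = N - k - 1
      omega
    have hrb : (⟨k + 1, hk⟩ : Fin N).rev = b := by
      rw [Fin.ext_iff, Fin.val_rev]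
      show N - (k + 1 + 1) = N - k - 2
      omega
    rw [hra, hrb] at h1
    have hab : b ≠ a := Fin.ne_of_val_ne (by show N - k - 2 ≠ N - k - 1; omega)
    have hba : b < a := Fin.mk_lt_mk.mpr (by omega)
    have hone : (Et * upperMat e) b a = 0 := by rw [hEt2]; exact Matrix.one_apply_ne hab
    rw [Matrix.mul_apply] at hone
    have hvanish : ∀ m ∈ (Finset.univ : Finset (Fin N)), m ∉ ({b, a} : Finset (Fin N)) →
        Et b m * upperMat e m a = 0 := by
      intro m _ hm
      simp only [Finset.mem_insert, Finset.mem_singleton] at hm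
      push_neg at hm
      rcases lt_or_ge (m : ℕ) (b : ℕ) with hmb | hmb
      · rw [hEtU.2 b m (Fin.lt_def.mpr hmb), zero_mul]
      · have h2 : ¬ m < a := by
          rw [Fin.lt_def]
          have e1 : (m : ℕ) ≠ (b : ℕ) := fun hh => hm.1 (Fin.ext hh)
          show ¬ ((m : ℕ) < N - k - 1)
          have e2 : (m : ℕ) ≠ N - k - 1 := fun hh => hm.2 (Fin.ext hh)
          have e3 : (b : ℕ) = N - k - 2 := rfl
          omega
        have hz : upperMat e m a = 0 := by
          show (if m = a then 1 else if m < a then e m a else 0) = 0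
          rw [if_neg hm.2, if_neg h2]
        rw [hz, mul_zero]
    rw [← Finset.sum_subset (Finset.subset_univ _) hvanish, Finset.sum_pair hab] at hone
    rw [hEtU.1, one_mul,
      show upperMat e b a = e b a from by
        show (if b = a then 1 else if b < a then e b a else 0) = e b a
        rw [if_neg hab, if_pos hba],
      show upperMat e a a = 1 from by
        show (if a = a then 1 else if a < a then e a a else 0) = 1
        rw [if_pos rfl],
      mul_one] at hone
    have hEba : Et b a = - e b a := eq_neg_of_add_eq_zero_right hone
    rw [hEba] at h1
    rw [h1]
    exact map_neg (tauHom c : PowerSeries A →+* PowerSeries A) (e b a)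

end TY
end
end
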